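/- For every n ≥ 0, the matrix A'_n = U_n A_n V_n is lower anti-triangular: for all subsets I, J ⊆ [n] with r_n(I) + r_n(J) ≤ 2^n, the entry A'_n(I, J) equals 0. -/

import Mathlib

open Finset Polynomial
open scoped Classical

namespace AR

/-- `binVal I = r_n(I) - 1 = Σ_{i ∈ I} 2^(i-1)`. -/
def binVal (I : Finset ℕ) : ℕ := ∑ i ∈ I, 2 ^ (i - 1)

lemma binVal_Icc (m : ℕ) : binVal (Finset.Icc 1 m) = 2 ^ m - 1 := by
  induction m with
  | zero => simp [binVal]
  | succ k ih =>
      rw [binVal, Finset.sum_Icc_succ_top (by omega)]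
      rw [binVal] at ih
      rw [ih]
      have h1 : 1 ≤ 2 ^ k := Nat.one_le_two_pow
      simp only [Nat.add_sub_cancel, pow_succ]
      omega

lemma binVal_lt {n : ℕ} {I : Finset ℕ} (h : I ⊆ Finset.Icc 1 n) : binVal I < 2 ^ n := by
  have h1 : binVal I ≤ binVal (Finset.Icc 1 n) :=
    Finset.sum_le_sum_of_subset h
  have h2 := binVal_Icc n
  have h3 : 1 ≤ 2 ^ n := Nat.one_le_two_pow
  omega

/-- The row/column index (zero-based, i.e. `r_n(I) - 1`) corresponding to a subset `I ⊆ [n]`. -/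
def idx (n : ℕ) (I : Finset ℕ) (h : I ⊆ Finset.Icc 1 n) : Fin (2 ^ n) :=
  ⟨binVal I, binVal_lt h⟩

def blockEquiv (n : ℕ) : Fin (2 ^ n) ⊕ Fin (2 ^ n) ≃ Fin (2 ^ (n + 1)) :=
  finSumFinEquiv.trans (finCongr (by rw [pow_succ, mul_two]))

/-- The pair of Adin–Roichman matrices `(A_n, B_n)`, defined recursively. -/
def ABpair : (n : ℕ) → Matrix (Fin (2 ^ n)) (Fin (2 ^ n)) ℤ × Matrix (Fin (2 ^ n)) (Fin (2 ^ n)) ℤ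
  | 0 => (Matrix.of fun _ _ => 1, Matrix.of fun _ _ => 1)
  | n + 1 =>
      let p := ABpair n
      ((Matrix.reindex (blockEquiv n) (blockEquiv n)) (Matrix.fromBlocks p.1 p.1 p.1 (-p.2)),
       (Matrix.reindex (blockEquiv n) (blockEquiv n)) (Matrix.fromBlocks p.1 p.1 0 (-p.2)))

def A (n : ℕ) : Matrix (Fin (2 ^ n)) (Fin (2 ^ n)) ℤ := (ABpair n).1

def B (n : ℕ) : Matrix (Fin (2 ^ n)) (Fin (2 ^ n)) ℤ := (ABpair n).2

/-- `R` is a (nonempty) integer interval. -/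
def IsInterval (R : Finset ℕ) : Prop := ∃ a b : ℕ, R = Finset.Icc a b

/-- `R` is a run of `I`: a maximal nonempty interval contained in `I`. -/
def IsRun (I R : Finset ℕ) : Prop :=
  R.Nonempty ∧ IsInterval R ∧ R ⊆ I ∧
    ∀ S : Finset ℕ, IsInterval S → S ⊆ I → R ⊆ S → S = R

/-- `R` is a prefix of `S` : `min R = min S` and `R ⊆ S`. -/
def IsPrefixOf (R S : Finset ℕ) : Prop := R.min = S.min ∧ R ⊆ S

/-- `I ≫ J` : every run of `I ∩ J` is a prefix of a run of `I`. -/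
def Gg (I J : Finset ℕ) : Prop :=
  ∀ R : Finset ℕ, IsRun (I ∩ J) R → ∃ S : Finset ℕ, IsRun I S ∧ IsPrefixOf R S

/-- The set of runs of `I`. -/
noncomputable def runs (I : Finset ℕ) : Finset (Finset ℕ) :=
  I.powerset.filter (fun R => IsRun I R)

/-- `π(I)`: the product of (size + 1) over the runs of `I`. -/
noncomputable def piFun (I : Finset ℕ) : ℕ := ∏ R ∈ runs I, (R.card + 1)

/-- `π'_n(I)`: the product of (size + 1) over the runs of `I` not containing `n`. -/
noncomputable def piFun' (n : ℕ) (I : Finset ℕ) : ℕ :=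
  ∏ R ∈ (runs I).filter (fun R => n ∉ R), (R.card + 1)

/-- The subset of `[n]` encoded by a zero-based index `i : Fin (2^n)` (binary digits). -/
def decode (n : ℕ) (i : Fin (2 ^ n)) : Finset ℕ :=
  (Finset.Icc 1 n).filter (fun k => Nat.testBit i.val (k - 1))

/-- The matrix `U_n`, with `U_n(I,J) = 1` if `I ⊇ J` and `0` otherwise. -/
def U (n : ℕ) : Matrix (Fin (2 ^ n)) (Fin (2 ^ n)) ℤ :=
  Matrix.of fun i j => if decode n j ⊆ decode n i then 1 else 0

/-- The matrix `V_n = U_n⁻¹`, with `V_n(I,J) = (-1)^{|I \ J|}` if `I ⊇ J` and `0` otherwise. -/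
def V (n : ℕ) : Matrix (Fin (2 ^ n)) (Fin (2 ^ n)) ℤ :=
  Matrix.of fun i j =>
    if decode n j ⊆ decode n i then (-1) ^ ((decode n i) \ (decode n j)).card else 0

def A' (n : ℕ) : Matrix (Fin (2 ^ n)) (Fin (2 ^ n)) ℤ := U n * A n * V n

def B' (n : ℕ) : Matrix (Fin (2 ^ n)) (Fin (2 ^ n)) ℤ := U n * B n * V n

/-- `E ⪯ I` : `E ⊆ I`, `E` contains no minimal element of a run of `I`,
and `E` contains no two consecutive integers. -/
def SubPrec (E I : Finset ℕ) : Prop :=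
  E ⊆ I ∧ (∀ R : Finset ℕ, (h : IsRun I R) → R.min' h.1 ∉ E) ∧
    ∀ i : ℕ, ¬ (i ∈ E ∧ i + 1 ∈ E)

/-- `I ⇝ J` : `J = ([n] \ I) ∪ E` for some `E ⪯ I`. -/
def Step (n : ℕ) (I J : Finset ℕ) : Prop :=
  ∃ E : Finset ℕ, SubPrec E I ∧ J = (Finset.Icc 1 n \ I) ∪ E

/-- `π_μ` for a composition `μ` of `n`. -/
def piComp {n : ℕ} (μ : Composition n) : ℕ := (μ.blocks.map (· + 1)).prod

/-- `π'_μ` for a composition `μ` of `n`. -/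
def piComp' {n : ℕ} (μ : Composition n) : ℕ := (μ.blocks.dropLast.map (· + 1)).prod

/-- The Thue–Morse sequence: `thueMorse m = s₂(m) % 2`. -/
def thueMorse (m : ℕ) : ℕ := (Nat.digits 2 m).sum % 2

lemma testBit_high (x n k : ℕ) (h : x < 2^n) (hk : n ≤ k) : Nat.testBit x k = false :=
  Nat.testBit_lt_two_pow (lt_of_lt_of_le h (Nat.pow_le_pow_right (by norm_num) hk))

lemma testBit_top (x n : ℕ) (h : x < 2^n) : Nat.testBit (2^n + x) n = true := by
  rw [Nat.testBit_eq_decide_div_mod_eq]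
  have h2 : 0 < 2^n := Nat.pow_pos (by norm_num)
  have : (2^n + x) / 2^n = 1 := by
    rw [Nat.add_comm, Nat.add_div_right _ h2, Nat.div_eq_of_lt h]
  simp [this]

lemma testBit_low (x n k : ℕ) (h : x < 2^n) (hk : k < n) :
    Nat.testBit (2^n + x) k = Nat.testBit x k := by
  have h1 := Nat.testBit_mod_two_pow (2^n + x) n k
  have h2 : (2^n + x) % 2^n = x := by
    rw [Nat.add_mod_left]; exact Nat.mod_eq_of_lt h
  rw [h2] at h1
  simp [hk] at h1
  exact h1.symm

lemma val_inl (n : ℕ) (i : Fin (2^n)) : (blockEquiv n (Sum.inl i)).val = i.val := by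
  simp [blockEquiv]

lemma val_inr (n : ℕ) (i : Fin (2^n)) : (blockEquiv n (Sum.inr i)).val = 2^n + i.val := by
  simp [blockEquiv, Nat.add_comm]

lemma decode_subset (n : ℕ) (i : Fin (2^n)) : decode n i ⊆ Finset.Icc 1 n :=
  Finset.filter_subset _ _

lemma not_mem_decode (n : ℕ) (i : Fin (2^n)) : n + 1 ∉ decode n i := by
  intro h
  have := Finset.mem_Icc.mp (decode_subset n i h)
  omega

lemma decode_inl (n : ℕ) (i : Fin (2^n)) :
    decode (n+1) (blockEquiv n (Sum.inl i)) = decode n i := by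
  ext k
  simp only [decode, Finset.mem_filter, Finset.mem_Icc, val_inl]
  constructor
  · rintro ⟨⟨h1, h2⟩, h3⟩
    refine ⟨⟨h1, ?_⟩, h3⟩
    by_contra hk
    have hk' : k = n + 1 := by omega
    rw [hk'] at h3
    simp only [Nat.add_sub_cancel] at h3
    rw [testBit_high i.val n n i.isLt le_rfl] at h3
    exact Bool.false_ne_true h3
  · rintro ⟨⟨h1, h2⟩, h3⟩
    exact ⟨⟨h1, by omega⟩, h3⟩

lemma decode_inr (n : ℕ) (i : Fin (2^n)) :
    decode (n+1) (blockEquiv n (Sum.inr i)) = insert (n+1) (decode n i) := by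
  ext k
  simp only [decode, Finset.mem_filter, Finset.mem_Icc, val_inr, Finset.mem_insert]
  constructor
  · rintro ⟨⟨h1, h2⟩, h3⟩
    rcases Nat.lt_or_ge k (n+1) with hk | hk
    · right
      rw [testBit_low i.val n (k-1) i.isLt (by omega)] at h3
      exact ⟨⟨h1, by omega⟩, h3⟩
    · left; omega
  · rintro (rfl | ⟨⟨h1, h2⟩, h3⟩)
    · refine ⟨⟨by omega, le_rfl⟩, ?_⟩
      simp only [Nat.add_sub_cancel]
      exact testBit_top i.val n i.isLt
    · refine ⟨⟨h1, by omega⟩, ?_⟩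
      rw [testBit_low i.val n (k-1) i.isLt (by omega)]
      exact h3

lemma U_succ (n : ℕ) : U (n+1) =
    (Matrix.reindex (blockEquiv n) (blockEquiv n)) (Matrix.fromBlocks (U n) 0 (U n) (U n)) := by
  ext k l
  obtain ⟨a, rfl⟩ := (blockEquiv n).surjective k
  obtain ⟨b, rfl⟩ := (blockEquiv n).surjective l
  rw [Matrix.reindex_apply, Matrix.submatrix_apply, Equiv.symm_apply_apply, Equiv.symm_apply_apply]
  cases a with
  | inl a => cases b with
    | inl b => simp [U, decode_inl]
    | inr b =>
        have : ¬ (decode (n+1) (blockEquiv n (Sum.inr b)) ⊆ decode (n+1) (blockEquiv n (Sum.inl a))) := by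
          rw [decode_inl, decode_inr]
          intro h
          exact not_mem_decode n a (h (Finset.mem_insert_self _ _))
        simp [U, this]
  | inr a => cases b with
    | inl b =>
        have : decode (n+1) (blockEquiv n (Sum.inl b)) ⊆ decode (n+1) (blockEquiv n (Sum.inr a))
            ↔ decode n b ⊆ decode n a := by
          rw [decode_inl, decode_inr]
          exact Finset.subset_insert_iff_of_notMem (not_mem_decode n b)
        simp [U, this]
    | inr b =>
        have : decode (n+1) (blockEquiv n (Sum.inr b)) ⊆ decode (n+1) (blockEquiv n (Sum.inr a))
            ↔ decode n b ⊆ decode n a := by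
          rw [decode_inr, decode_inr]
          exact Finset.insert_subset_insert_iff (not_mem_decode n b)
        simp [U, this]

lemma V_succ (n : ℕ) : V (n+1) =
    (Matrix.reindex (blockEquiv n) (blockEquiv n)) (Matrix.fromBlocks (V n) 0 (-(V n)) (V n)) := by
  ext k l
  obtain ⟨a, rfl⟩ := (blockEquiv n).surjective k
  obtain ⟨b, rfl⟩ := (blockEquiv n).surjective l
  rw [Matrix.reindex_apply, Matrix.submatrix_apply, Equiv.symm_apply_apply, Equiv.symm_apply_apply]
  cases a with
  | inl a => cases b with
    | inl b => simp [V, decode_inl]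
    | inr b =>
        have : ¬ (decode (n+1) (blockEquiv n (Sum.inr b)) ⊆ decode (n+1) (blockEquiv n (Sum.inl a))) := by
          rw [decode_inl, decode_inr]
          intro h
          exact not_mem_decode n a (h (Finset.mem_insert_self _ _))
        simp [V, this]
  | inr a => cases b with
    | inl b =>
        have h1 : decode (n+1) (blockEquiv n (Sum.inl b)) ⊆ decode (n+1) (blockEquiv n (Sum.inr a))
            ↔ decode n b ⊆ decode n a := by
          rw [decode_inl, decode_inr]
          exact Finset.subset_insert_iff_of_notMem (not_mem_decode n b)
        have h2 : (decode (n+1) (blockEquiv n (Sum.inr a)) \ decode (n+1) (blockEquiv n (Sum.inl b))).card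
            = (decode n a \ decode n b).card + 1 := by
          rw [decode_inl, decode_inr, Finset.insert_sdiff_of_notMem _ (not_mem_decode n b),
            Finset.card_insert_of_notMem (by simp [not_mem_decode n a])]
        simp only [V, Matrix.of_apply, h1, h2, Matrix.fromBlocks_apply₂₁, Matrix.neg_apply]
        split <;> simp [pow_succ]
    | inr b =>
        have h1 : decode (n+1) (blockEquiv n (Sum.inr b)) ⊆ decode (n+1) (blockEquiv n (Sum.inr a))
            ↔ decode n b ⊆ decode n a := by
          rw [decode_inr, decode_inr]
          exact Finset.insert_subset_insert_iff (not_mem_decode n b)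
        have h2 : (decode (n+1) (blockEquiv n (Sum.inr a)) \ decode (n+1) (blockEquiv n (Sum.inr b))).card
            = (decode n a \ decode n b).card := by
          rw [decode_inr, decode_inr, Finset.insert_sdiff_insert,
            Finset.sdiff_insert_of_notMem (not_mem_decode n a)]
        simp [V, h1, h2]

lemma A_succ (n : ℕ) : A (n+1) =
    (Matrix.reindex (blockEquiv n) (blockEquiv n)) (Matrix.fromBlocks (A n) (A n) (A n) (-(B n))) := rfl

lemma B_succ (n : ℕ) : B (n+1) =
    (Matrix.reindex (blockEquiv n) (blockEquiv n)) (Matrix.fromBlocks (A n) (A n) 0 (-(B n))) := rfl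

lemma reindex_mul' {k : Type*} [Fintype k] [DecidableEq k] {m : ℕ} (e : k ≃ Fin m)
    (M N : Matrix k k ℤ) :
    (Matrix.reindex e e M) * (Matrix.reindex e e N) = Matrix.reindex e e (M * N) := by
  simp [Matrix.reindex_apply, Matrix.submatrix_mul_equiv]

lemma A'_succ (n : ℕ) : A' (n+1) =
    (Matrix.reindex (blockEquiv n) (blockEquiv n))
      (Matrix.fromBlocks 0 (A' n) (A' n + B' n) (A' n - B' n)) := by
  rw [A', U_succ, A_succ, V_succ, reindex_mul', reindex_mul']
  congr 1
  rw [Matrix.fromBlocks_multiply, Matrix.fromBlocks_multiply, Matrix.fromBlocks_inj]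
  refine ⟨?_, ?_, ?_, ?_⟩ <;>
  · simp [A', B', Matrix.mul_add, Matrix.add_mul, Matrix.mul_neg, Matrix.neg_mul, Matrix.mul_sub,
      Matrix.sub_mul, Matrix.mul_assoc]
    try abel

lemma B'_succ (n : ℕ) : B' (n+1) =
    (Matrix.reindex (blockEquiv n) (blockEquiv n))
      (Matrix.fromBlocks 0 (A' n) (B' n) (A' n - B' n)) := by
  rw [B', U_succ, B_succ, V_succ, reindex_mul', reindex_mul']
  congr 1
  rw [Matrix.fromBlocks_multiply, Matrix.fromBlocks_multiply, Matrix.fromBlocks_inj]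
  refine ⟨?_, ?_, ?_, ?_⟩ <;>
  · simp [A', B', Matrix.mul_add, Matrix.add_mul, Matrix.mul_neg, Matrix.neg_mul, Matrix.mul_sub,
      Matrix.sub_mul, Matrix.mul_assoc]
    try abel

lemma anti (n : ℕ) : ∀ (i j : Fin (2^n)), i.val + j.val + 2 ≤ 2^n →
    A' n i j = 0 ∧ B' n i j = 0 := by
  induction n with
  | zero => intro i j h; norm_num at h
  | succ n ih =>
      intro i j h
      obtain ⟨a, rfl⟩ := (blockEquiv n).surjective i
      obtain ⟨b, rfl⟩ := (blockEquiv n).surjective j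
      rw [A'_succ, B'_succ, Matrix.reindex_apply, Matrix.reindex_apply,
        Matrix.submatrix_apply, Matrix.submatrix_apply]
      simp only [Equiv.symm_apply_apply]
      have hp : (2:ℕ)^(n+1) = 2^n + 2^n := by rw [pow_succ]; omega
      cases a with
      | inl a => cases b with
        | inl b => simp
        | inr b =>
            have hv := val_inl n a
            have hv' := val_inr n b
            have hab : a.val + b.val + 2 ≤ 2^n := by omega
            simp [(ih a b hab).1]
      | inr a => cases b with
        | inl b =>
            have hv := val_inr n a
            have hv' := val_inl n b
            have hab : a.val + b.val + 2 ≤ 2^n := by omega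
            obtain ⟨h1, h2⟩ := ih a b hab
            simp [Matrix.add_apply, h1, h2]
        | inr b =>
            have hv := val_inr n a
            have hv' := val_inr n b
            have : a.val + b.val + 2 ≤ 0 := by omega
            omega

theorem stmt10 (n : ℕ) (I J : Finset ℕ) (hI : I ⊆ Finset.Icc 1 n) (hJ : J ⊆ Finset.Icc 1 n)
    (h : (1 + binVal I) + (1 + binVal J) ≤ 2 ^ n) :
    A' n (idx n I hI) (idx n J hJ) = 0 := by
  have h' : (idx n I hI).val + (idx n J hJ).val + 2 ≤ 2^n := by
    simp only [idx]; omega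
  exact (anti n _ _ h').1

end AR
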